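/- Let K ≥ 2. For the Case-2 protocol distribution: S is a uniformly random M-subset of [K] (3 ≤ M, 2M ≤ K), W is uniform on S, r ∈ {M-2, M-1} is drawn with P(r = M-2) = 2(M-1)/K, Q1 = S \ {W}, and Q2 is a uniformly random (M-1)-subset of ({W} ∪ ([K] \ S)) containing W iff r = M-2 and with all remaining elements drawn uniformly from [K] \ S. Then for the unordered pair Q = {Q1, Q2}, the conditional probability P(Q | W = W') is the same for all W' ∈ [K]; consequently W is independent of Q. -/

import Mathlib

open Finset

section Helpers

variable {α : Type*} [DecidableEq α] [Fintype α]

lemma finset_pair_eq_pair_iff {a b c d : α} :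
    ({a, b} : Finset α) = {c, d} ↔ (a = c ∧ b = d) ∨ (a = d ∧ b = c) := by
  rw [← Finset.coe_inj, Finset.coe_insert, Finset.coe_singleton, Finset.coe_insert,
    Finset.coe_singleton, Set.pair_eq_pair_iff]

lemma sum_sum_ite_pair (t : α → α → ℝ) {a b : α} (hab : a ≠ b) :
    (∑ A, ∑ B, if ({A, B} : Finset α) = {a, b} then t A B else 0) = t a b + t b a := by
  have h : ∀ A B : α, (if ({A, B} : Finset α) = {a, b} then t A B else 0)
      = (if A = a then if B = b then t A B else 0 else 0)
        + (if A = b then if B = a then t A B else 0 else 0) := by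
    intro A B
    simp only [finset_pair_eq_pair_iff]
    by_cases h1 : A = a <;> by_cases h2 : B = b <;> by_cases h3 : A = b <;>
      by_cases h4 : B = a <;> simp_all
  simp_rw [h, Finset.sum_add_distrib]
  congr 1 <;> simp

end Helpers

set_option maxHeartbeats 2000000 in
theorem stmt16 (K M : ℕ) (hM : 3 ≤ M) (hK : 2 * M ≤ K)
    (μ : Finset (Fin K) × Fin K × Finset (Fin K) → ℝ)
    (hμ : ∀ S w Q2, μ (S, w, Q2) =
      if S.card = M ∧ w ∈ S ∧ Q2.card = M - 1 ∧ Q2 ⊆ insert w (Finset.univ \ S) then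
        (1 / (K.choose M : ℝ)) * (1 / (M : ℝ)) *
          (if w ∈ Q2 then
              (2 * ((M : ℝ) - 1) / K) * (1 / ((K - M).choose (M - 2) : ℝ))
            else
              (1 - 2 * ((M : ℝ) - 1) / K) * (1 / ((K - M).choose (M - 1) : ℝ)))
      else 0)
    (Qf : Finset (Fin K) × Fin K × Finset (Fin K) → Finset (Finset (Fin K)))
    (hQf : ∀ ω, Qf ω = {ω.1.erase ω.2.1, ω.2.2}) :
    (∀ (q : Finset (Finset (Fin K))) (w' w'' : Fin K),
      (∑ ω, if Qf ω = q ∧ ω.2.1 = w' then μ ω else 0)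
        = (∑ ω, if Qf ω = q ∧ ω.2.1 = w'' then μ ω else 0)) ∧
    (∀ (q : Finset (Finset (Fin K))) (w' : Fin K),
      (∑ ω, if Qf ω = q ∧ ω.2.1 = w' then μ ω else 0)
        = (∑ ω, if Qf ω = q then μ ω else 0) *
          (∑ ω, if ω.2.1 = w' then μ ω else 0)) := by
  classical
  have hK0 : 0 < K := by omega
  set c0 : ℝ := (1 / (K.choose M : ℝ)) * (1 / (M : ℝ)) with hc0
  set aa : ℝ := (2 * ((M : ℝ) - 1) / K) * (1 / ((K - M).choose (M - 2) : ℝ)) with haa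
  set bb : ℝ := (1 - 2 * ((M : ℝ) - 1) / K) * (1 / ((K - M).choose (M - 1) : ℝ)) with hbb
  have hch2 : 0 < (K - M).choose (M - 2) := Nat.choose_pos (by omega)
  have hch1 : 0 < (K - M).choose (M - 1) := Nat.choose_pos (by omega)
  have hC1 : (((K - M).choose (M - 1) : ℝ)) ≠ 0 := Nat.cast_ne_zero.2 hch1.ne'
  have hC2 : (((K - M).choose (M - 2) : ℝ)) ≠ 0 := Nat.cast_ne_zero.2 hch2.ne'
  have hKne : (K : ℝ) ≠ 0 := Nat.cast_ne_zero.2 hK0.ne'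
  -- the key binomial identity
  have h1 : (K - M).choose (M - 1) * (M - 1) = (K - M).choose (M - 2) * (K - 2 * M + 2) := by
    have h2 : M - 2 + 1 = M - 1 := by omega
    have := Nat.choose_succ_right_eq (K - M) (M - 2)
    rw [h2] at this
    rw [this]
    congr 1
    omega
  have h1R : (((K - M).choose (M - 1) : ℝ)) * ((M : ℝ) - 1)
      = (((K - M).choose (M - 2) : ℝ)) * ((K : ℝ) - 2 * M + 2) := by
    have := congrArg (Nat.cast : ℕ → ℝ) h1
    push_cast [Nat.cast_sub (show 1 ≤ M by omega), Nat.cast_sub (show 2 * M ≤ K by omega)] at this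
    convert this using 2 <;> ring
  have key_id : aa = 2 * bb := by
    rw [haa, hbb]
    field_simp
    nlinarith [h1R]
  -- value of μ at reindexed points
  have hval : ∀ (w : Fin K) (X Y : Finset (Fin K)), w ∉ X →
      μ (insert w X, w, Y)
        = if X.card = M - 1 ∧ Y.card = M - 1 ∧ Disjoint X Y then
            c0 * (if w ∈ Y then aa else bb) else 0 := by
    intro w X Y hw
    have hcard : (insert w X).card = X.card + 1 := Finset.card_insert_of_notMem hw
    have hiff : ((insert w X).card = M ∧ w ∈ insert w X ∧ Y.card = M - 1 ∧
        Y ⊆ insert w (Finset.univ \ insert w X)) ↔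
        (X.card = M - 1 ∧ Y.card = M - 1 ∧ Disjoint X Y) := by
      constructor
      · rintro ⟨hc, -, h3, h4⟩
        refine ⟨by omega, h3, ?_⟩
        rw [Finset.disjoint_left]
        intro x hxX hxY
        rcases Finset.mem_insert.1 (h4 hxY) with h | h
        · exact hw (h ▸ hxX)
        · exact (Finset.mem_sdiff.1 h).2 (Finset.mem_insert.2 (Or.inr hxX))
      · rintro ⟨hc, h3, hd⟩
        refine ⟨by omega, Finset.mem_insert_self _ _, h3, ?_⟩
        intro y hy
        by_cases hyw : y = w
        · exact hyw ▸ Finset.mem_insert_self _ _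
        · refine Finset.mem_insert.2 (Or.inr (Finset.mem_sdiff.2 ⟨Finset.mem_univ _, ?_⟩))
          intro hmem
          rcases Finset.mem_insert.1 hmem with h | h
          · exact hyw h
          · exact (Finset.disjoint_left.1 hd h) hy
    rw [hμ]
    simp only [hiff]
  have hval2 : ∀ (w : Fin K) (A B : Finset (Fin K)),
      (if w ∉ A then μ (insert w A, w, B) else 0)
        = if A.card = M - 1 ∧ B.card = M - 1 ∧ Disjoint A B then
            (if w ∈ A then 0 else if w ∈ B then c0 * aa else c0 * bb) else 0 := by
    intro w A B
    by_cases hw : w ∈ A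
    · simp [hw]
    · rw [if_pos hw, hval w A B hw]
      by_cases hc : A.card = M - 1 ∧ B.card = M - 1 ∧ Disjoint A B
      · rw [if_pos hc, if_pos hc, if_neg hw, mul_ite]
      · rw [if_neg hc, if_neg hc]
  -- Step A : collapse the w-coordinate
  have hsum1 : ∀ (q : Finset (Finset (Fin K))) (w : Fin K),
      (∑ ω, if Qf ω = q ∧ ω.2.1 = w then μ ω else 0)
        = ∑ S : Finset (Fin K), ∑ Q2 : Finset (Fin K),
            if ({S.erase w, Q2} : Finset (Finset (Fin K))) = q then μ (S, w, Q2) else 0 := by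
    intro q w
    rw [Fintype.sum_prod_type]
    refine Finset.sum_congr rfl fun S _ => ?_
    rw [Fintype.sum_prod_type, Finset.sum_comm]
    refine Finset.sum_congr rfl fun Q2 _ => ?_
    simp only [hQf]
    have : ∀ w'' : Fin K,
        (if ({S.erase w'', Q2} : Finset (Finset (Fin K))) = q ∧ w'' = w
          then μ (S, w'', Q2) else 0)
        = if w'' = w then
            (if ({S.erase w, Q2} : Finset (Finset (Fin K))) = q then μ (S, w, Q2) else 0)
          else 0 := by
      intro w''
      by_cases h : w'' = w
      · subst h; simp
      · simp [h]
    simp_rw [this]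
    simp
  -- Step B : reindex S by A = S.erase w
  have hsum2 : ∀ (q : Finset (Finset (Fin K))) (w : Fin K),
      (∑ S : Finset (Fin K), ∑ Q2 : Finset (Fin K),
          if ({S.erase w, Q2} : Finset (Finset (Fin K))) = q then μ (S, w, Q2) else 0)
        = ∑ A : Finset (Fin K), ∑ B : Finset (Fin K),
            if ({A, B} : Finset (Finset (Fin K))) = q then
              (if w ∉ A then μ (insert w A, w, B) else 0) else 0 := by
    intro q w
    have e1 : (∑ S : Finset (Fin K), ∑ Q2 : Finset (Fin K),
        if ({S.erase w, Q2} : Finset (Finset (Fin K))) = q then μ (S, w, Q2) else 0)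
        = ∑ S ∈ Finset.univ.filter (fun S : Finset (Fin K) => w ∈ S),
            ∑ Q2 : Finset (Fin K),
              if ({S.erase w, Q2} : Finset (Finset (Fin K))) = q then μ (S, w, Q2) else 0 := by
      refine (Finset.sum_filter_of_ne fun S _ hne => ?_).symm
      by_contra hw
      apply hne
      refine Finset.sum_eq_zero fun Q2 _ => ?_
      rw [hμ]
      have : ¬(S.card = M ∧ w ∈ S ∧ Q2.card = M - 1 ∧
          Q2 ⊆ insert w (Finset.univ \ S)) := by tauto
      rw [if_neg this]
      simp
    have e2 : (∑ A : Finset (Fin K), ∑ B : Finset (Fin K),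
        if ({A, B} : Finset (Finset (Fin K))) = q then
          (if w ∉ A then μ (insert w A, w, B) else 0) else 0)
        = ∑ A ∈ Finset.univ.filter (fun A : Finset (Fin K) => w ∉ A),
            ∑ B : Finset (Fin K),
              if ({A, B} : Finset (Finset (Fin K))) = q then
                (if w ∉ A then μ (insert w A, w, B) else 0) else 0 := by
      refine (Finset.sum_filter_of_ne fun A _ hne => ?_).symm
      by_contra hw
      apply hne
      refine Finset.sum_eq_zero fun B _ => ?_
      simp [hw]
    rw [e1, e2]
    refine Finset.sum_nbij' (fun S => S.erase w) (fun A => insert w A) ?_ ?_ ?_ ?_ ?_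
    · intro S hS; simp
    · intro A hA; simp at hA; simp [hA]
    · intro S hS; simp at hS; simp [Finset.insert_erase hS]
    · intro A hA; simp at hA; simp [Finset.erase_insert hA]
    · intro S hS
      simp at hS
      refine Finset.sum_congr rfl fun B _ => ?_
      simp [Finset.notMem_erase, Finset.insert_erase hS]
  -- Step C : the reindexed sum does not depend on w
  have hcore : ∀ (q : Finset (Finset (Fin K))) (w w' : Fin K),
      (∑ A : Finset (Fin K), ∑ B : Finset (Fin K),
          if ({A, B} : Finset (Finset (Fin K))) = q then
            (if w ∉ A then μ (insert w A, w, B) else 0) else 0)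
        = ∑ A : Finset (Fin K), ∑ B : Finset (Fin K),
            if ({A, B} : Finset (Finset (Fin K))) = q then
              (if w' ∉ A then μ (insert w' A, w', B) else 0) else 0 := by
    intro q w w'
    by_cases hq : ∃ a b : Finset (Fin K), a ≠ b ∧ q = {a, b}
    · obtain ⟨a, b, hab, rfl⟩ := hq
      rw [sum_sum_ite_pair _ hab, sum_sum_ite_pair _ hab]
      simp only [hval2]
      by_cases hc : a.card = M - 1 ∧ b.card = M - 1 ∧ Disjoint a b
      · obtain ⟨ha, hb, hd⟩ := hc
        have e1 : (a.card = M - 1 ∧ b.card = M - 1 ∧ Disjoint a b) = True :=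
          eq_true ⟨ha, hb, hd⟩
        have e2 : (b.card = M - 1 ∧ a.card = M - 1 ∧ Disjoint b a) = True :=
          eq_true ⟨hb, ha, hd.symm⟩
        simp only [e1, e2, if_true]
        have hgen : ∀ u : Fin K,
            ((if u ∈ a then 0 else if u ∈ b then c0 * aa else c0 * bb)
              + (if u ∈ b then 0 else if u ∈ a then c0 * aa else c0 * bb)) = c0 * aa := by
          intro u
          by_cases hu1 : u ∈ a
          · have hu2 : u ∉ b := Finset.disjoint_left.1 hd hu1
            simp [hu1, hu2]
          · by_cases hu2 : u ∈ b
            · simp [hu1, hu2]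
            · simp only [hu1, hu2, if_false]
              rw [key_id]; ring
        rw [hgen w, hgen w']
      · have hc' : ¬(b.card = M - 1 ∧ a.card = M - 1 ∧ Disjoint b a) := by
          rintro ⟨x1, x2, x3⟩; exact hc ⟨x2, x1, x3.symm⟩
        simp only [eq_false hc, eq_false hc', if_false]
    · have hzero : ∀ u : Fin K,
          (∑ A : Finset (Fin K), ∑ B : Finset (Fin K),
            if ({A, B} : Finset (Finset (Fin K))) = q then
              (if u ∉ A then μ (insert u A, u, B) else 0) else 0) = 0 := by
        intro u
        refine Finset.sum_eq_zero fun A _ => Finset.sum_eq_zero fun B _ => ?_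
        by_cases hpq : ({A, B} : Finset (Finset (Fin K))) = q
        · rw [if_pos hpq, hval2]
          have hAB : A = B := by
            by_contra hne; exact hq ⟨A, B, hne, hpq.symm⟩
          subst hAB
          have hfalse : ¬(A.card = M - 1 ∧ A.card = M - 1 ∧ Disjoint A A) := by
            rintro ⟨hc1, -, hc3⟩
            rw [disjoint_self] at hc3
            rw [hc3] at hc1
            simp [Finset.bot_eq_empty] at hc1
            omega
          simp only [eq_false hfalse, if_false]
        · rw [if_neg hpq]
      rw [hzero w, hzero w']
  -- part 1
  have part1 : ∀ (q : Finset (Finset (Fin K))) (w' w'' : Fin K),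
      (∑ ω, if Qf ω = q ∧ ω.2.1 = w' then μ ω else 0)
        = (∑ ω, if Qf ω = q ∧ ω.2.1 = w'' then μ ω else 0) := by
    intro q w' w''
    rw [hsum1, hsum2, hsum1, hsum2]
    exact hcore q w' w''
  refine ⟨part1, ?_⟩
  -- total over w of the joint equals the Q-marginal
  have hQsum : ∀ q : Finset (Finset (Fin K)),
      (∑ ω, if Qf ω = q then μ ω else 0)
        = ∑ w'' : Fin K, ∑ ω, if Qf ω = q ∧ ω.2.1 = w'' then μ ω else 0 := by
    intro q
    rw [Finset.sum_comm]
    refine Finset.sum_congr rfl fun ω _ => ?_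
    by_cases hP : Qf ω = q
    · simp [hP]
    · simp [hP]
  -- marginal of W is 1/K
  have hW : ∀ w' : Fin K,
      (∑ ω, if ω.2.1 = w' then μ ω else 0) = 1 / (K : ℝ) := by
    intro w'
    rw [Fintype.sum_prod_type]
    have step1 : ∀ S : Finset (Fin K),
        (∑ p : Fin K × Finset (Fin K), if p.1 = w' then μ (S, p) else 0)
          = ∑ Q2 : Finset (Fin K), μ (S, w', Q2) := by
      intro S
      rw [Fintype.sum_prod_type, Finset.sum_comm]
      refine Finset.sum_congr rfl fun Q2 _ => ?_
      simp
    simp_rw [step1]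
    -- a counting lemma
    have hcount : ∀ (m : ℕ) (X : Finset (Fin K)) (c : ℝ),
        (∑ Q2 : Finset (Fin K), if Q2.card = m ∧ Q2 ⊆ X then c else 0)
          = (X.card.choose m : ℝ) * c := by
      intro m X c
      rw [← Finset.sum_filter]
      have hf : Finset.univ.filter (fun Q2 : Finset (Fin K) => Q2.card = m ∧ Q2 ⊆ X)
          = X.powersetCard m := by
        ext Q2
        simp only [Finset.mem_filter, Finset.mem_univ, true_and, Finset.mem_powersetCard]
        tauto
      rw [hf, Finset.sum_const, Finset.card_powersetCard, nsmul_eq_mul]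
    -- inner sum over Q2
    have step2 : ∀ S : Finset (Fin K),
        (∑ Q2 : Finset (Fin K), μ (S, w', Q2))
          = if S.card = M ∧ w' ∈ S then c0 else 0 := by
      intro S
      by_cases hS : S.card = M ∧ w' ∈ S
      · obtain ⟨hSc, hwS⟩ := hS
        rw [if_pos ⟨hSc, hwS⟩]
        set T : Finset (Fin K) := insert w' (Finset.univ \ S) with hT
        have hwT : w' ∉ Finset.univ \ S := by simp [hwS]
        have hDc : (Finset.univ \ S).card = K - M := by
          rw [Finset.card_univ_diff, hSc, Fintype.card_fin]
        have hTc : T.card = K - M + 1 := by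
          rw [hT, Finset.card_insert_of_notMem hwT, hDc]
        have hsubiff : ∀ Q2 : Finset (Fin K),
            Q2 ⊆ Finset.univ \ S ↔ (Q2 ⊆ T ∧ w' ∉ Q2) := by
          intro Q2
          constructor
          · intro h
            refine ⟨h.trans (Finset.subset_insert _ _), fun hw => hwT (h hw)⟩
          · rintro ⟨h, hw⟩
            intro y hy
            rcases Finset.mem_insert.1 (h hy) with h1 | h1
            · exact absurd (h1 ▸ hy) hw
            · exact h1
        have hsplit : ∀ Q2 : Finset (Fin K), μ (S, w', Q2)
            = ((if Q2.card = M - 1 ∧ Q2 ⊆ T then c0 * aa else 0)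
              - (if Q2.card = M - 1 ∧ Q2 ⊆ Finset.univ \ S then c0 * aa else 0))
              + (if Q2.card = M - 1 ∧ Q2 ⊆ Finset.univ \ S then c0 * bb else 0) := by
          intro Q2
          rw [hμ]
          by_cases h1 : Q2.card = M - 1
          · by_cases h2 : Q2 ⊆ T
            · by_cases h3 : w' ∈ Q2
              · have h4 : ¬ Q2 ⊆ Finset.univ \ S := by
                  rw [hsubiff]; tauto
                rw [if_pos ⟨hSc, hwS, h1, h2⟩, if_pos h3, if_pos ⟨h1, h2⟩,
                  if_neg (by tauto), if_neg (by tauto)]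
                ring
              · have h4 : Q2 ⊆ Finset.univ \ S := (hsubiff Q2).2 ⟨h2, h3⟩
                rw [if_pos ⟨hSc, hwS, h1, h2⟩, if_neg h3, if_pos ⟨h1, h2⟩,
                  if_pos ⟨h1, h4⟩, if_pos ⟨h1, h4⟩]
                ring
            · have h4 : ¬ Q2 ⊆ Finset.univ \ S := fun h => h2 ((hsubiff Q2).1 h).1
              rw [if_neg (by tauto), if_neg (by tauto), if_neg (by tauto),
                if_neg (by tauto)]
              ring
          · rw [if_neg (by tauto), if_neg (by tauto), if_neg (by tauto), if_neg (by tauto)]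
            ring
        simp_rw [hsplit]
        rw [Finset.sum_add_distrib, Finset.sum_sub_distrib, hcount, hcount, hcount, hTc, hDc]
        have hpas : (K - M + 1).choose (M - 1)
            = (K - M).choose (M - 2) + (K - M).choose (M - 1) := by
          have h2 : M - 2 + 1 = M - 1 := by omega
          rw [← h2]
          exact Nat.choose_succ_succ' (K - M) (M - 2)
        rw [hpas, haa, hbb]
        push_cast
        field_simp
        ring
      · rw [if_neg hS]
        refine Finset.sum_eq_zero fun Q2 _ => ?_
        rw [hμ, if_neg (by tauto)]
    simp_rw [step2]
    -- count the sets S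
    have hsplit2 : ∀ S : Finset (Fin K),
        (if S.card = M ∧ w' ∈ S then c0 else 0)
          = (if S.card = M ∧ S ⊆ Finset.univ then c0 else 0)
            - (if S.card = M ∧ S ⊆ Finset.univ.erase w' then c0 else 0) := by
      intro S
      have he : S ⊆ Finset.univ.erase w' ↔ w' ∉ S := by
        rw [Finset.subset_erase]
        simp
      by_cases h1 : S.card = M
      · by_cases h2 : w' ∈ S
        · rw [if_pos ⟨h1, h2⟩, if_pos ⟨h1, Finset.subset_univ S⟩,
            if_neg (fun h => (he.1 h.2) h2)]
          ring
        · rw [if_neg (by tauto), if_pos ⟨h1, Finset.subset_univ S⟩, if_pos ⟨h1, he.2 h2⟩]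
          ring
      · rw [if_neg (by tauto), if_neg (by tauto), if_neg (by tauto)]
        ring
    simp_rw [hsplit2]
    rw [Finset.sum_sub_distrib, hcount, hcount, Finset.card_univ, Fintype.card_fin,
      Finset.card_erase_of_mem (Finset.mem_univ w'), Finset.card_univ, Fintype.card_fin]
    have hpas2 : K.choose M = (K - 1).choose (M - 1) + (K - 1).choose M := by
      have h := Nat.choose_succ_succ' (K - 1) (M - 1)
      rw [show K - 1 + 1 = K from by omega, show M - 1 + 1 = M from by omega] at h
      exact h
    have hmul : K * ((K - 1).choose (M - 1)) = K.choose M * M := by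
      have h := Nat.add_one_mul_choose_eq (K - 1) (M - 1)
      rw [show K - 1 + 1 = K from by omega,
        show M - 1 + 1 = M from by omega] at h
      exact h
    have hchKM : 0 < K.choose M := Nat.choose_pos (by omega)
    have hchKMne : ((K.choose M : ℝ)) ≠ 0 := Nat.cast_ne_zero.2 hchKM.ne'
    have hMne : ((M : ℝ)) ≠ 0 := Nat.cast_ne_zero.2 (by omega)
    rw [hpas2, hc0]
    push_cast
    have hmulR : (K : ℝ) * ((K - 1).choose (M - 1) : ℝ) = (K.choose M : ℝ) * (M : ℝ) := by
      exact_mod_cast hmul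
    field_simp
    linarith [hmulR]
  -- part 2
  intro q w'
  rw [hQsum q, hW w']
  have : ∀ w'' : Fin K,
      (∑ ω, if Qf ω = q ∧ ω.2.1 = w'' then μ ω else 0)
        = (∑ ω, if Qf ω = q ∧ ω.2.1 = w' then μ ω else 0) := fun w'' => part1 q w'' w'
  rw [Finset.sum_congr rfl fun w'' _ => this w'']
  rw [Finset.sum_const, Finset.card_univ, Fintype.card_fin, nsmul_eq_mul]
  field_simp
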